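/- Let p be a prime and N ≥ 1 an integer. Let h ∈ ℚ[[q]] be a formal power series with constant coefficient 0, such that every coefficient of h has nonnegative p-adic valuation and the coefficient of q¹ in h has p-adic valuation 0. Let γ : ℕ → ℚ satisfy: padicValRat p (γ_m) ≥ 0 for all 0 ≤ m < N (whenever γ_m ≠ 0), and γ_N ≠ 0 with padicValRat p (γ_N) = −1. Define g ∈ ℚ[[q]] by letting the coefficient of qⁿ in g be ∑_{m=0}^{n} γ_m · (coefficient of qⁿ in h^m) (a finite sum, since h has zero constant term). Then the coefficient of q^N in g has p-adic valuation exactly −1, and for every 0 ≤ m < N the coefficient of q^m in g has nonnegative p-adic valuation. -/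

import Mathlib

section aux

variable {p : ℕ}

lemma padic_int_add (hp : p.Prime) {a b : ℚ} (ha : 0 ≤ padicValRat p a) (hb : 0 ≤ padicValRat p b) :
    0 ≤ padicValRat p (a + b) := by
  haveI : Fact p.Prime := ⟨hp⟩
  by_cases hab : a + b = 0
  · simp [hab]
  · exact le_trans (le_min ha hb) (padicValRat.min_le_padicValRat_add hab)

lemma padic_int_mul (hp : p.Prime) {a b : ℚ} (ha : 0 ≤ padicValRat p a) (hb : 0 ≤ padicValRat p b) :
    0 ≤ padicValRat p (a * b) := by
  haveI : Fact p.Prime := ⟨hp⟩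
  by_cases h0 : a = 0
  · simp [h0]
  by_cases h1 : b = 0
  · simp [h1]
  rw [padicValRat.mul h0 h1]
  exact add_nonneg ha hb

lemma padic_int_sum (hp : p.Prime) {ι : Type*} {s : Finset ι} {f : ι → ℚ}
    (hf : ∀ i ∈ s, 0 ≤ padicValRat p (f i)) :
    0 ≤ padicValRat p (∑ i ∈ s, f i) := by
  classical
  induction s using Finset.induction with
  | empty => simp
  | insert _ _ hx ih =>
    rw [Finset.sum_insert hx]
    exact padic_int_add hp (hf _ (Finset.mem_insert_self _ _))
      (ih fun i hi => hf i (Finset.mem_insert_of_mem hi))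

lemma pow_coeff_zero {h : PowerSeries ℚ} (hconst : PowerSeries.constantCoeff h = 0) :
    ∀ m n : ℕ, n < m → PowerSeries.coeff n (h ^ m) = 0 := by
  intro m
  induction m with
  | zero => intro n hn; omega
  | succ m ih =>
    intro n hn
    rw [pow_succ, mul_comm, PowerSeries.coeff_mul]
    apply Finset.sum_eq_zero
    rintro ⟨i, j⟩ hij
    rw [Finset.HasAntidiagonal.mem_antidiagonal] at hij
    by_cases hj : j < m
    · simp [ih j hj]
    · have hi : i = 0 := by omega
      subst hi
      have h0 : PowerSeries.coeff 0 h = 0 := by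
        rw [PowerSeries.coeff_zero_eq_constantCoeff]; exact hconst
      simp [h0]

lemma pow_coeff_diag {h : PowerSeries ℚ} (hconst : PowerSeries.constantCoeff h = 0) :
    ∀ m : ℕ, PowerSeries.coeff m (h ^ m) = (PowerSeries.coeff 1 h) ^ m := by
  intro m
  induction m with
  | zero => simp
  | succ m ih =>
    rw [pow_succ, mul_comm, PowerSeries.coeff_mul]
    rw [Finset.sum_eq_single (1, m)]
    · rw [ih]; ring
    · rintro ⟨i, j⟩ hij hne
      rw [Finset.HasAntidiagonal.mem_antidiagonal] at hij
      by_cases hj : j < m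
      · simp [pow_coeff_zero hconst m j hj]
      · have : i = 0 ∨ (i = 1 ∧ j = m) := by omega
        rcases this with hi | ⟨hi, hj'⟩
        · subst hi
          have h0 : PowerSeries.coeff 0 h = 0 := by
            rw [PowerSeries.coeff_zero_eq_constantCoeff]; exact hconst
          simp [h0]
        · exact absurd (by rw [hi, hj']) hne
    · intro habs
      exact absurd (Finset.HasAntidiagonal.mem_antidiagonal.2 (by omega)) habs

lemma pow_coeff_int (hp : p.Prime) {h : PowerSeries ℚ}
    (hcoeff : ∀ n : ℕ, 0 ≤ padicValRat p (PowerSeries.coeff n h)) :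
    ∀ m n : ℕ, 0 ≤ padicValRat p (PowerSeries.coeff n (h ^ m)) := by
  intro m
  induction m with
  | zero =>
    intro n
    rw [pow_zero, PowerSeries.coeff_one]
    split <;> simp
  | succ m ih =>
    intro n
    rw [pow_succ, mul_comm, PowerSeries.coeff_mul]
    exact padic_int_sum hp fun ij _ => padic_int_mul hp (hcoeff _) (ih _)

end aux

/-- Substitution lemma: if `h ∈ ℚ[[q]]` has zero constant term, `p`-adically integral
coefficients and a `p`-adic unit as coefficient of `q¹`, and `γ : ℕ → ℚ` has `p`-adically
integral values `γ_m` for `m < N` while `γ_N ≠ 0` has `p`-adic valuation `−1`, then the power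
series `g` with `n`-th coefficient `∑_{m=0}^{n} γ_m·(coeff of qⁿ in h^m)` has coefficient of
`q^N` of `p`-adic valuation exactly `−1`, and all earlier coefficients are `p`-adically
integral. -/
theorem substitution_valuation (p : ℕ) (hp : p.Prime) (N : ℕ) (hN : 1 ≤ N)
    (h : PowerSeries ℚ) (hconst : PowerSeries.constantCoeff h = 0)
    (hcoeff : ∀ n : ℕ, 0 ≤ padicValRat p (PowerSeries.coeff n h))
    (h1ne : PowerSeries.coeff 1 h ≠ 0)
    (h1val : padicValRat p (PowerSeries.coeff 1 h) = 0)
    (γ : ℕ → ℚ) (hγ : ∀ m : ℕ, m < N → 0 ≤ padicValRat p (γ m))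
    (hγN : γ N ≠ 0) (hγNval : padicValRat p (γ N) = -1)
    (g : PowerSeries ℚ)
    (hg : ∀ n : ℕ, PowerSeries.coeff n g =
      ∑ m ∈ Finset.range (n + 1), γ m * PowerSeries.coeff n (h ^ m)) :
    padicValRat p (PowerSeries.coeff N g) = -1 ∧
      ∀ m : ℕ, m < N → 0 ≤ padicValRat p (PowerSeries.coeff m g) := by
  haveI : Fact p.Prime := ⟨hp⟩
  constructor
  · rw [hg N, Finset.sum_range_succ]
    set A : ℚ := ∑ m ∈ Finset.range N, γ m * PowerSeries.coeff N (h ^ m) with hA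
    set B : ℚ := γ N * PowerSeries.coeff N (h ^ N) with hB
    have hAint : 0 ≤ padicValRat p A := by
      apply padic_int_sum hp
      intro m hm
      exact padic_int_mul hp (hγ m (Finset.mem_range.1 hm)) (pow_coeff_int hp hcoeff m N)
    have hBval : padicValRat p B = -1 := by
      rw [hB, pow_coeff_diag hconst N, padicValRat.mul hγN (pow_ne_zero _ h1ne),
        padicValRat.pow (PowerSeries.coeff 1 h), h1val, hγNval]
      ring
    have hBne : B ≠ 0 := by
      rw [hB, pow_coeff_diag hconst N]
      exact mul_ne_zero hγN (pow_ne_zero _ h1ne)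
    have hABne : A + B ≠ 0 := by
      intro habs
      have : A = -B := by linarith [habs]
      rw [this, padicValRat.neg, hBval] at hAint
      omega
    by_cases hA0 : A = 0
    · rw [hA0, zero_add, hBval]
    · rw [padicValRat.add_eq_min hABne hA0 hBne (by omega), hBval]
      omega
  · intro m hm
    rw [hg m]
    apply padic_int_sum hp
    intro k hk
    have hkN : k < N := by
      have := Finset.mem_range.1 hk; omega
    exact padic_int_mul hp (hγ k hkN) (pow_coeff_int hp hcoeff k m)
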